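/- Let M be a complete, separable, compactly injective metric space. Then every nonempty finite intersection of open balls V = ⋂_{i=1}^k O(aᵢ, rᵢ) in M is homotopically trivial: every continuous map from the n-sphere Sⁿ into V extends to a continuous map from the (n+1)-ball Bⁿ⁺¹ into V. -/

import Mathlib

open Metric Set TopologicalSpace
open scoped ENNReal
set_option maxHeartbeats 1000000
set_option synthInstance.maxHeartbeats 400000

/-- A metric space `M` is compactly injective if every distance-preserving map
from a compact subspace of a compact metric space into `M` extends to a
distance-preserving map of the whole compact space. -/
def CompactlyInjective (M : Type*) [MetricSpace M] : Prop :=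
  ∀ (L : Type) (_ : MetricSpace L) (_ : CompactSpace L) (K : Set L), IsCompact K →
    ∀ f : K → M, Isometry f → ∃ g : L → M, Isometry g ∧ ∀ x : K, g x = f x

theorem stmt10 (M : Type*) [MetricSpace M] [CompleteSpace M]
    [TopologicalSpace.SeparableSpace M] (hM : CompactlyInjective M)
    (ι : Type) [Finite ι] (a : ι → M) (r : ι → ℝ)
    (V : Set M) (hV : V = ⋂ i, Metric.ball (a i) (r i)) (hne : V.Nonempty)
    (n : ℕ)
    (f : (Metric.sphere (0 : EuclideanSpace ℝ (Fin (n + 1))) 1) → M)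
    (hf : Continuous f) (hfV : Set.range f ⊆ V) :
    ∃ g : (Metric.closedBall (0 : EuclideanSpace ℝ (Fin (n + 1))) 1) → M,
      Continuous g ∧ Set.range g ⊆ V ∧
      ∀ x, g (Set.inclusion Metric.sphere_subset_closedBall x) = f x := by
  classical
  obtain ⟨p, hp⟩ := hne
  set E := EuclideanSpace ℝ (Fin (n + 1)) with hE
  set W : Type := ↥(lp (fun _ : ℕ => ℝ) ∞) with hW
  set Φ : M → W := kuratowskiEmbedding M with hΦdef
  have hΦ : Isometry Φ := kuratowskiEmbedding.isometry M
  have hVmem : ∀ z : M, (∀ i, dist z (a i) < r i) → z ∈ V := by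
    intro z hz; rw [hV, mem_iInter]; intro i; exact mem_ball.2 (hz i)
  have hVd : ∀ z ∈ V, ∀ i, dist z (a i) < r i := by
    intro z hz i; rw [hV, mem_iInter] at hz; exact mem_ball.1 (hz i)
  haveI : CompactSpace (sphere (0:E) 1) := isCompact_iff_compactSpace.mp (isCompact_sphere _ _)
  set S : Set M := range f ∪ insert p (range a) with hSdef
  have hS : IsCompact S :=
    (isCompact_range hf).union (((finite_range a).insert p).isCompact)
  have hpS : p ∈ S := Or.inr (mem_insert _ _)
  have haS : ∀ i, a i ∈ S := fun i => Or.inr (mem_insert_of_mem _ ⟨i, rfl⟩)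
  have hfS : ∀ s, f s ∈ S := fun s => Or.inl ⟨s, rfl⟩
  set H : M × ℝ → W := fun z => (1 - z.2) • Φ z.1 + z.2 • Φ p with hHdef
  have hHcont : Continuous H :=
    ((continuous_const.sub continuous_snd).smul
      (hΦ.continuous.comp continuous_fst)).add (continuous_snd.smul continuous_const)
  set T : Set W := H '' (S ×ˢ Icc (0:ℝ) 1) with hTdef
  have hTcomp : IsCompact T := (hS.prod isCompact_Icc).image hHcont
  have hΦT : ∀ z ∈ S, Φ z ∈ T := by
    intro z hz
    refine ⟨(z, 0), ⟨hz, by norm_num⟩, ?_⟩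
    simp [hHdef]
  haveI : CompactSpace T := isCompact_iff_compactSpace.mp hTcomp
  set K : Set T := Subtype.val ⁻¹' (Φ '' S) with hKdef
  have hKcomp : IsCompact K :=
    (((hS.image hΦ.continuous).isClosed).preimage continuous_subtype_val).isCompact
  have hκex : ∀ x : K, ∃ z, z ∈ S ∧ Φ z = ((x : T) : W) := fun x => x.2
  set κ : K → M := fun x => (hκex x).choose with hκdef
  have hκS : ∀ x, κ x ∈ S := fun x => (hκex x).choose_spec.1
  have hκΦ : ∀ x, Φ (κ x) = ((x : T) : W) := fun x => (hκex x).choose_spec.2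
  have hκiso : Isometry κ := by
    apply Isometry.of_dist_eq
    intro x y
    have h1 : dist (κ x) (κ y) = dist (Φ (κ x)) (Φ (κ y)) := (hΦ.dist_eq _ _).symm
    rw [h1, hκΦ, hκΦ, Subtype.dist_eq, Subtype.dist_eq]
  obtain ⟨g, hgiso, hgK⟩ := hM (↥T) inferInstance inferInstance K hKcomp κ hκiso
  have fact1 : ∀ (z : M) (hz : z ∈ S) (hm : Φ z ∈ T), g ⟨Φ z, hm⟩ = z := by
    intro z hz hm
    have hmem : (⟨Φ z, hm⟩ : T) ∈ K := ⟨z, hz, rfl⟩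
    have h1 := hgK ⟨⟨Φ z, hm⟩, hmem⟩
    have h2 := hκΦ ⟨⟨Φ z, hm⟩, hmem⟩
    rw [h1]
    exact hΦ.injective h2
  -- the projection to the sphere
  have he₀ : (EuclideanSpace.single (0 : Fin (n+1)) (1:ℝ)) ∈ sphere (0:E) 1 := by
    simp [mem_sphere_zero_iff_norm, EuclideanSpace.norm_single]
  set ν : closedBall (0:E) 1 → sphere (0:E) 1 := fun x =>
    if h : (x : E) = 0 then ⟨_, he₀⟩
    else ⟨‖(x:E)‖⁻¹ • (x:E), by
      rw [mem_sphere_zero_iff_norm, norm_smul, norm_inv, norm_norm,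
        inv_mul_cancel₀ (norm_ne_zero_iff.mpr h)]⟩ with hνdef
  set Q : closedBall (0:E) 1 → M := fun x => if (x : E) = 0 then p else f (ν x) with hQdef
  have hQS : ∀ x, Q x ∈ S := by
    intro x
    by_cases h : (x:E) = 0
    · simp only [hQdef, if_pos h]; exact hpS
    · simp only [hQdef, if_neg h]; exact hfS _
  have hQV : ∀ x, Q x ∈ V := by
    intro x
    by_cases h : (x:E) = 0
    · simp only [hQdef, if_pos h]; exact hp
    · simp only [hQdef, if_neg h]; exact hfV ⟨_, rfl⟩
  have hxnorm : ∀ x : closedBall (0:E) 1, ‖(x:E)‖ ≤ 1 := fun x =>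
    mem_closedBall_zero_iff.mp x.2
  set ψ : closedBall (0:E) 1 → W := fun x => H (Q x, 1 - ‖(x:E)‖) with hψdef
  have hψT : ∀ x, ψ x ∈ T := by
    intro x
    refine ⟨(Q x, 1 - ‖(x:E)‖), ⟨hQS x, ⟨?_, ?_⟩⟩, rfl⟩
    · show (0:ℝ) ≤ 1 - ‖(x:E)‖
      linarith [hxnorm x]
    · show (1:ℝ) - ‖(x:E)‖ ≤ 1
      linarith [norm_nonneg (x:E)]
  have hψeq : ∀ x, ψ x = (1 - (1 - ‖(x:E)‖)) • Φ (Q x) + (1 - ‖(x:E)‖) • Φ p :=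
    fun x => rfl
  -- continuity of ψ
  have hnormcont : Continuous fun x : closedBall (0:E) 1 => ‖(x:E)‖ :=
    continuous_subtype_val.norm
  obtain ⟨D, hD⟩ : ∃ D, ∀ z ∈ S, ‖Φ z‖ ≤ D := by
    obtain ⟨D, hD⟩ := (isBounded_iff_forall_norm_le).mp (hS.image hΦ.continuous).isBounded
    exact ⟨D, fun z hz => hD _ (mem_image_of_mem _ hz)⟩
  have hψcont : Continuous ψ := by
    have h2 : Continuous fun x : closedBall (0:E) 1 => (1 - ‖(x:E)‖) • Φ p :=
      (continuous_const.sub hnormcont).smul continuous_const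
    have h1 : Continuous fun x : closedBall (0:E) 1 => (1 - (1 - ‖(x:E)‖)) • Φ (Q x) := by
      rw [continuous_iff_continuousAt]
      intro x₀
      by_cases h0 : (x₀ : E) = 0
      · have hn0 : ‖(x₀:E)‖ = 0 := by rw [h0, norm_zero]
        have key : Filter.Tendsto (fun x : closedBall (0:E) 1 =>
            (1 - (1 - ‖(x:E)‖)) • Φ (Q x)) (nhds x₀) (nhds 0) := by
          apply squeeze_zero_norm (a := fun x : closedBall (0:E) 1 => ‖(x:E)‖ * (|D|+1))
          · intro x
            rw [norm_smul, Real.norm_eq_abs, sub_sub_cancel, abs_norm]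
            apply mul_le_mul_of_nonneg_left _ (norm_nonneg _)
            exact le_trans (hD _ (hQS x)) (by linarith [le_abs_self D])
          · have h5 := (hnormcont.mul (continuous_const (y := |D|+1))).continuousAt (x := x₀)
            unfold ContinuousAt at h5
            simp [hn0] at h5
            exact h5
        have hval : (1 - (1 - ‖(x₀:E)‖)) • Φ (Q x₀) = (0:W) := by
          rw [hn0]; simp
        unfold ContinuousAt
        convert key using 2
      · have hA : IsOpen {x : closedBall (0:E) 1 | ¬ (x:E) = 0} :=
          isOpen_compl_singleton.preimage continuous_subtype_val
        have hAx : {x : closedBall (0:E) 1 | ¬ (x:E) = 0} ∈ nhds x₀ := hA.mem_nhds h0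
        have hνval : ContinuousAt (fun x : closedBall (0:E) 1 => ((ν x : E))) x₀ := by
          have hev : (fun x : closedBall (0:E) 1 => ((ν x : E))) =ᶠ[nhds x₀]
              fun x => ‖(x:E)‖⁻¹ • (x:E) := by
            filter_upwards [hAx] with x hx
            simp only [hνdef, dif_neg hx]
          have hc : ContinuousAt (fun x : closedBall (0:E) 1 => ‖(x:E)‖⁻¹ • (x:E)) x₀ :=
            ((hnormcont.continuousAt).inv₀ (norm_ne_zero_iff.mpr h0)).smul
              continuous_subtype_val.continuousAt
          exact hc.congr hev.symm
        have hν : ContinuousAt ν x₀ := by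
          rw [Topology.IsInducing.subtypeVal.continuousAt_iff]
          exact hνval
        have hQc : ContinuousAt (fun x => Φ (Q x)) x₀ := by
          have hev : (fun x : closedBall (0:E) 1 => Φ (Q x)) =ᶠ[nhds x₀]
              fun x => Φ (f (ν x)) := by
            filter_upwards [hAx] with x hx
            simp only [hQdef, if_neg hx]
          have hc : ContinuousAt (fun x : closedBall (0:E) 1 => Φ (f (ν x))) x₀ :=
            ((hΦ.continuous.comp hf).continuousAt).comp hν
          exact hc.congr hev.symm
        exact ((continuous_const.sub (continuous_const.sub hnormcont)).continuousAt).smul hQc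
    exact h1.add h2
  refine ⟨fun x => g ⟨ψ x, hψT x⟩, ?_, ?_, ?_⟩
  · exact hgiso.continuous.comp (Continuous.subtype_mk hψcont _)
  · rintro _ ⟨x, rfl⟩
    apply hVmem
    intro i
    show dist (g ⟨ψ x, hψT x⟩) (a i) < r i
    have hga : g ⟨Φ (a i), hΦT _ (haS i)⟩ = a i := fact1 _ (haS i) _
    have hd : dist (g ⟨ψ x, hψT x⟩) (a i) = dist (ψ x) (Φ (a i)) := by
      conv_lhs => rw [← hga]
      rw [hgiso.dist_eq, Subtype.dist_eq]
    rw [hd]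
    set t := 1 - ‖(x:E)‖ with ht
    have ht0 : 0 ≤ t := by simp only [ht]; linarith [hxnorm x]
    have ht1 : t ≤ 1 := by simp only [ht]; linarith [norm_nonneg (x:E)]
    have hsub : ψ x - Φ (a i) = (1 - t) • (Φ (Q x) - Φ (a i)) + t • (Φ p - Φ (a i)) := by
      rw [hψeq x, ← ht]
      module
    have hb : dist (ψ x) (Φ (a i)) ≤ (1 - t) * dist (Q x) (a i) + t * dist p (a i) := by
      rw [dist_eq_norm, hsub]
      calc ‖(1 - t) • (Φ (Q x) - Φ (a i)) + t • (Φ p - Φ (a i))‖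
          ≤ ‖(1-t) • (Φ (Q x) - Φ (a i))‖ + ‖t • (Φ p - Φ (a i))‖ := norm_add_le _ _
        _ = (1-t) * ‖Φ (Q x) - Φ (a i)‖ + t * ‖Φ p - Φ (a i)‖ := by
            rw [norm_smul, norm_smul, Real.norm_eq_abs, Real.norm_eq_abs,
              abs_of_nonneg (by linarith), abs_of_nonneg ht0]
        _ = (1 - t) * dist (Q x) (a i) + t * dist p (a i) := by
            rw [← dist_eq_norm, ← dist_eq_norm, hΦ.dist_eq, hΦ.dist_eq]
    have h1 := hVd _ (hQV x) i
    have h2 := hVd _ hp i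
    rcases eq_or_lt_of_le ht1 with hteq | hlt
    · rw [hteq] at hb; simp at hb; linarith
    · have h3 : (1 - t) * dist (Q x) (a i) < (1 - t) * r i :=
        mul_lt_mul_of_pos_left h1 (by linarith)
      have h4 : t * dist p (a i) ≤ t * r i := mul_le_mul_of_nonneg_left h2.le ht0
      nlinarith
  · intro x
    show g ⟨ψ (Set.inclusion Metric.sphere_subset_closedBall x),
      hψT (Set.inclusion Metric.sphere_subset_closedBall x)⟩ = f x
    have hx1 : ‖(x : E)‖ = 1 := mem_sphere_zero_iff_norm.mp x.2
    have hx0 : ((Set.inclusion Metric.sphere_subset_closedBall x : closedBall (0:E) 1) : E)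
        = (x:E) := rfl
    have hx0' : ((Set.inclusion Metric.sphere_subset_closedBall x : closedBall (0:E) 1) : E) ≠ 0 := by
      rw [hx0]; intro h; rw [h] at hx1; simp at hx1
    have hν : ν (Set.inclusion Metric.sphere_subset_closedBall x) = x := by
      simp only [hνdef, dif_neg hx0']
      apply Subtype.ext
      show ‖(x:E)‖⁻¹ • (x:E) = (x:E)
      rw [hx1, inv_one, one_smul]
    have hψx : ψ (Set.inclusion Metric.sphere_subset_closedBall x) = Φ (f x) := by
      rw [hψeq, hx0, hx1]
      simp only [hQdef, if_neg hx0', hν]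
      norm_num
    have heq : (⟨ψ (Set.inclusion Metric.sphere_subset_closedBall x),
        hψT _⟩ : T) = ⟨Φ (f x), hΦT _ (hfS x)⟩ := Subtype.ext hψx
    rw [heq]
    exact fact1 _ (hfS x) _
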